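/- Let τ : A → ℂ be a trace on A having the change of variable property τ((a·γ) jγ) = τ(a) for all a ∈ A, γ ∈ Γ, with respect to a 1-cocycle j : Γ → Z(A) ∩ A^*. Then the linear functional τ' on A ⋊ Γ defined by τ'(a ⊗ γ) = 0 for γ ≠ 1 and τ'(a ⊗ 1) = τ(a) is a σ-trace: τ'(xy) = τ'(σ(y)x) for all x, y ∈ A ⋊ Γ, where σ(a ⊗ γ) = ((jγ^{-1})·γ) a ⊗ γ. -/

import Mathlib

/-- Crossed-product multiplication on pure tensors: `(a ⊗ γ)(b ⊗ μ) = (a·μ) b ⊗ γμ`. -/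
def cpMul {A : Type*} [Ring A] {Γ : Type*} [Group Γ]
    (act : A → Γ → A) (p q : A × Γ) : A × Γ :=
  (act p.1 q.2 * q.1, p.2 * q.2)

/-- The automorphism `σ(a ⊗ γ) = ((jγ⁻¹)·γ) a ⊗ γ` on pure tensors. -/
def cpSigma {A : Type*} [Ring A] {Γ : Type*} [Group Γ]
    (act : A → Γ → A) (j : Γ → A) (p : A × Γ) : A × Γ :=
  (act (j p.2⁻¹) p.2 * p.1, p.2)

/-- The induced functional `τ'(a ⊗ γ) = τ(a)` if `γ = 1` and `0` otherwise. -/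
noncomputable def cpTau {A : Type*} [Ring A] {Γ : Type*} [Group Γ]
    (τ : A → ℂ) (p : A × Γ) : ℂ :=
  open scoped Classical in if p.2 = 1 then τ p.1 else 0

/-- **Twisted trace on the crossed product.**
Let `τ : A → ℂ` be a trace with the change of variable property `τ((a·γ) jγ) = τ(a)`
with respect to a 1-cocycle `j : Γ → Z(A) ∩ A^*`.  Then `τ'` is a `σ`-trace on `A ⋊ Γ`:
`τ'(xy) = τ'(σ(y)x)` (checked on pure tensors, which span `A ⋊ Γ`). -/
theorem crossed_product_twisted_trace
    {A : Type*} [Ring A] {Γ : Type*} [Group Γ]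
    (act : A → Γ → A)
    (hact_one : ∀ a, act a 1 = a)
    (hact_mul : ∀ a γ μ, act (act a γ) μ = act a (γ * μ))
    (hact_ringmul : ∀ γ a b, act (a * b) γ = act a γ * act b γ)
    (hact_add : ∀ γ a b, act (a + b) γ = act a γ + act b γ)
    (j : Γ → A)
    (hj_center : ∀ γ x, j γ * x = x * j γ)
    (hj_unit : ∀ γ, IsUnit (j γ))
    (hcocycle : ∀ γ μ, j (γ * μ) = act (j γ) μ * j μ)
    (τ : A → ℂ)
    (hτ_add : ∀ a b, τ (a + b) = τ a + τ b)
    (hτ_trace : ∀ a b, τ (a * b) = τ (b * a))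
    (hτ_change : ∀ a γ, τ (act a γ * j γ) = τ a) :
    ∀ p q : A × Γ,
      cpTau τ (cpMul act p q) = cpTau τ (cpMul act (cpSigma act j q) p) := by
  rintro ⟨a, γ⟩ ⟨b, μ⟩
  simp only [cpMul, cpSigma, cpTau]
  by_cases h : γ * μ = 1
  · have hγ : γ = μ⁻¹ := eq_inv_of_mul_eq_one_left h
    subst hγ
    refine (if_pos h).trans (Eq.trans ?_ (if_pos (mul_inv_cancel μ)).symm)
    have key : act (act (j μ⁻¹) μ * b) μ⁻¹ * a
        = (act b μ⁻¹ * a) * j μ⁻¹ := by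
      rw [hact_ringmul, hact_mul, mul_inv_cancel, hact_one, mul_assoc,
        hj_center μ⁻¹ (act b μ⁻¹ * a)]
    rw [key]
    have h1 : act (b * act a μ) μ⁻¹ = act b μ⁻¹ * a := by
      rw [hact_ringmul, hact_mul, mul_inv_cancel, hact_one]
    calc τ (act a μ * b) = τ (b * act a μ) := hτ_trace _ _
      _ = τ (act (b * act a μ) μ⁻¹ * j μ⁻¹) := (hτ_change _ _).symm
      _ = τ ((act b μ⁻¹ * a) * j μ⁻¹) := by rw [h1]
  · have h2 : μ * γ ≠ 1 := fun hc => h (by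
      have : γ = μ⁻¹ := eq_inv_of_mul_eq_one_right hc
      rw [this, inv_mul_cancel])
    exact (if_neg h).trans (if_neg h2).symm
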